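/- For a prime p and m ∈ ℕ, the number of polyfunctions over ℤ/p^mℤ equals p raised to the power ∑_{k=1}^{m} s(p^k), where s is the Smarandache function s(n) = min{k : n ∣ k!}. -/

import Mathlib

/-- The Smarandache function: the least `k` with `n ∣ k!`. -/
noncomputable def smarandache (n : ℕ) : ℕ := sInf {k : ℕ | n ∣ Nat.factorial k}

/-- The number of polyfunctions over `ℤ/nℤ`. -/
noncomputable def Psi (n : ℕ) : ℕ :=
  Nat.card {f : ZMod n → ZMod n // ∃ p : Polynomial (ZMod n), ∀ x, p.eval x = f x}

open Polynomial Finset Nat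

namespace PsiAux

def d (n k : ℕ) : ℕ := n / Nat.gcd n (k !)

lemma d_pos {n : ℕ} (hn : 0 < n) (k : ℕ) : 0 < d n k :=
  Nat.div_pos (Nat.le_of_dvd hn (Nat.gcd_dvd_left _ _)) (Nat.gcd_pos_of_pos_left _ hn)

lemma dvd_d_mul_factorial {n : ℕ} (k : ℕ) : n ∣ d n k * k ! := by
  obtain ⟨u, hu⟩ := Nat.gcd_dvd_right n (k !)
  refine ⟨u, ?_⟩
  calc d n k * k ! = d n k * (Nat.gcd n (k !) * u) := by rw [← hu]
    _ = (n / Nat.gcd n (k !) * Nat.gcd n (k !)) * u := by rw [d]; ring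
    _ = n * u := by rw [Nat.div_mul_cancel (Nat.gcd_dvd_left _ _)]

lemma d_dvd_of_dvd_mul {n : ℕ} (hn : 0 < n) (k : ℕ) {z : ℤ}
    (h : (n : ℤ) ∣ z * (k ! : ℤ)) : (d n k : ℤ) ∣ z := by
  set g := Nat.gcd n (k !) with hg
  have hgpos : 0 < g := Nat.gcd_pos_of_pos_left _ hn
  have hgn : g ∣ n := Nat.gcd_dvd_left _ _
  have hgk : g ∣ k ! := Nat.gcd_dvd_right _ _
  have hco : Nat.Coprime (n / g) (k ! / g) := Nat.coprime_div_gcd_div_gcd hgpos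
  have hn' : (n : ℤ) = (g : ℤ) * (d n k : ℤ) := by
    have : g * (n / g) = n := Nat.mul_div_cancel' hgn
    rw [d]; exact_mod_cast this.symm
  have hk' : (k ! : ℤ) = (g : ℤ) * ((k ! / g : ℕ) : ℤ) := by
    exact_mod_cast (Nat.mul_div_cancel' hgk).symm
  rw [hn', hk'] at h
  have h2 : (d n k : ℤ) ∣ z * ((k ! / g : ℕ) : ℤ) := by
    rcases h with ⟨c, hc⟩
    refine ⟨c, mul_left_cancel₀ (show (g:ℤ) ≠ 0 by exact_mod_cast hgpos.ne') ?_⟩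
    rw [← mul_assoc, mul_comm (g:ℤ) z, mul_assoc, hc]; ring
  exact (Nat.isCoprime_iff_coprime.mpr hco).dvd_of_dvd_mul_right h2


lemma eval_desc {n : ℕ} [NeZero n] (k : ℕ) (x : ZMod n) :
    (descPochhammer (ZMod n) k).eval x = ((x.val.descFactorial k : ℕ) : ZMod n) := by
  conv_lhs => rw [show x = ((x.val : ℕ) : ZMod n) from (ZMod.natCast_rightInverse x).symm]
  rw [descPochhammer_eval_eq_descFactorial]

lemma null_mul {n : ℕ} [NeZero n] {c k : ℕ} (h : n ∣ c * k !) (x : ZMod n) :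
    ((c : ℕ) : ZMod n) * (descPochhammer (ZMod n) k).eval x = 0 := by
  rw [eval_desc, ← Nat.cast_mul, ZMod.natCast_eq_zero_iff]
  exact dvd_trans h (mul_dvd_mul_left c (Nat.factorial_dvd_descFactorial _ _))

lemma eval_desc_zero_fun {n : ℕ} [NeZero n] {k : ℕ} (h : n ∣ k !) (x : ZMod n) :
    (descPochhammer (ZMod n) k).eval x = 0 := by
  have := null_mul (n := n) (c := 1) (k := k) (by simpa using h) x
  simpa using this

lemma monic_desc (n : ℕ) (k : ℕ) : (descPochhammer (ZMod n) k).Monic := by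
  have := (monic_descPochhammer ℤ k).map (Int.castRingHom (ZMod n))
  rwa [descPochhammer_map] at this

lemma natDegree_desc (n : ℕ) [Fact (1 < n)] (k : ℕ) :
    (descPochhammer (ZMod n) k).natDegree = k := by
  have h1 : (descPochhammer ℤ k).natDegree = k := descPochhammer_natDegree ℤ k
  have := (monic_descPochhammer ℤ k).natDegree_map (Int.castRingHom (ZMod n))
  rw [descPochhammer_map] at this
  rw [this, h1]

/-- Every polynomial function is a combination of `descPochhammer` functions of index `< N`,
provided `n ∣ N !`. -/
lemma repr_exists {n : ℕ} [Fact (1 < n)] {N : ℕ} (hN0 : 0 < N) (hN : n ∣ N !) :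
    ∀ q : (ZMod n)[X], ∃ c : ℕ → ZMod n,
      ∀ x, q.eval x = ∑ k ∈ range N, c k * (descPochhammer (ZMod n) k).eval x := by
  haveI : NeZero n := ⟨by have := (Fact.out : 1 < n); omega⟩
  intro q
  generalize hD : q.natDegree = D
  induction D using Nat.strong_induction_on generalizing q with
  | _ D ih =>
  by_cases hq0 : q = 0
  · exact ⟨0, by simp [hq0]⟩
  by_cases hDN : N ≤ D
  · -- reduce mod the monic polynomial descPochhammer N
    set dN := descPochhammer (ZMod n) N with hdN
    have hmon : dN.Monic := monic_desc n N
    have hdN1 : dN ≠ 1 := by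
      intro h
      have h2 := natDegree_desc n N
      rw [hdN] at h; rw [h] at h2; simp at h2; omega
    have hdeg : (q %ₘ dN).natDegree < D := by
      calc (q %ₘ dN).natDegree < dN.natDegree := natDegree_modByMonic_lt q hmon hdN1
        _ = N := natDegree_desc n N
        _ ≤ D := hDN
    obtain ⟨c, hc⟩ := ih (q %ₘ dN).natDegree (hdeg) (q %ₘ dN) rfl
    refine ⟨c, fun x => ?_⟩
    have hsplit : q = q %ₘ dN + dN * (q /ₘ dN) := (modByMonic_add_div q dN).symm
    calc q.eval x = (q %ₘ dN).eval x + dN.eval x * (q /ₘ dN).eval x := by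
          conv_lhs => rw [hsplit]
          simp [eval_add, eval_mul]
      _ = (q %ₘ dN).eval x := by rw [eval_desc_zero_fun hN x]; ring
      _ = _ := hc x
  · push_neg at hDN
    -- D < N : peel the top coefficient
    set a := q.coeff D with ha
    set r := q - C a * descPochhammer (ZMod n) D with hr
    have hqeval : ∀ x, q.eval x = r.eval x + a * (descPochhammer (ZMod n) D).eval x := by
      intro x; rw [hr]; simp only [eval_sub, eval_mul, eval_C]; ring
    have hdesc1 : (descPochhammer (ZMod n) D).coeff D = 1 := by
      have h := (monic_desc n D).coeff_natDegree
      rwa [natDegree_desc] at h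
    by_cases hr0 : r = 0
    · refine ⟨fun k => if k = D then a else 0, fun x => ?_⟩
      rw [hqeval x, hr0]
      simp only [eval_zero, zero_add, ite_mul, zero_mul]
      rw [Finset.sum_ite_eq' (range N) D]
      simp [hDN]
    · have hcoeff : r.coeff D = 0 := by
        rw [hr]
        simp only [coeff_sub, coeff_C_mul, hdesc1, mul_one, ← ha, sub_self]
      have hrdeg_le : r.natDegree ≤ D := by
        apply le_trans (natDegree_sub_le _ _)
        apply max_le (le_of_eq hD)
        exact le_trans (natDegree_C_mul_le _ _) (le_of_eq (natDegree_desc n D))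
      have hrdeg : r.natDegree < D := by
        rcases lt_or_eq_of_le hrdeg_le with h | h
        · exact h
        · exfalso
          apply hr0
          have : r.leadingCoeff = 0 := by rw [leadingCoeff, h]; exact hcoeff
          exact leadingCoeff_eq_zero.mp this
      obtain ⟨c, hc⟩ := ih r.natDegree hrdeg r rfl
      refine ⟨fun k => c k + if k = D then a else 0, fun x => ?_⟩
      have hsplit : ∀ k ∈ range N,
          (c k + if k = D then a else 0) * (descPochhammer (ZMod n) k).eval x
            = c k * (descPochhammer (ZMod n) k).eval x
              + (if k = D then a * (descPochhammer (ZMod n) D).eval x else 0) := by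
        intro k _
        by_cases h : k = D
        · subst h; rw [if_pos rfl, if_pos rfl]; ring
        · simp [h]
      have key : ∑ k ∈ range N,
          (c k + if k = D then a else 0) * (descPochhammer (ZMod n) k).eval x = q.eval x := by
        rw [Finset.sum_congr rfl hsplit, Finset.sum_add_distrib,
          Finset.sum_ite_eq' (range N) D, hqeval x, hc x]
        simp [hDN]
      exact key.symm


noncomputable def Phi (n N : ℕ) (a : ∀ k : Fin N, Fin (d n (k : ℕ))) : ZMod n → ZMod n :=
  fun x => ∑ k : Fin N, (((a k : ℕ)) : ZMod n) * (descPochhammer (ZMod n) (k : ℕ)).eval x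

lemma Phi_injective {n : ℕ} [Fact (1 < n)] {N : ℕ} (hNn : N ≤ n) :
    Function.Injective (Phi n N) := by
  haveI : NeZero n := ⟨by have := (Fact.out : 1 < n); omega⟩
  have hnpos : 0 < n := by have := (Fact.out : 1 < n); omega
  intro a b hab
  have h : ∀ x, Phi n N a x = Phi n N b x := fun x => congrFun hab x
  suffices H : ∀ jv, ∀ hj : jv < N, a ⟨jv, hj⟩ = b ⟨jv, hj⟩ by
    funext k
    have := H k.1 k.2
    simpa using this
  intro jv
  induction jv using Nat.strong_induction_on with
  | _ jv ih =>
  intro hj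
  set x : ZMod n := ((jv : ℕ) : ZMod n) with hx
  have hxval : x.val = jv := ZMod.val_natCast_of_lt (lt_of_lt_of_le hj hNn)
  set F : Fin N → ZMod n :=
    fun k => ((a k : ℕ) : ZMod n) * (descPochhammer (ZMod n) (k : ℕ)).eval x with hF
  set G : Fin N → ZMod n :=
    fun k => ((b k : ℕ) : ZMod n) * (descPochhammer (ZMod n) (k : ℕ)).eval x with hG
  have hFG : ∀ k : Fin N, k ≠ ⟨jv, hj⟩ → F k - G k = 0 := by
    intro k hk
    rcases lt_trichotomy (k : ℕ) jv with hlt | heq | hgt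
    · have hk' : a k = b k := by
        have := ih (k : ℕ) hlt k.isLt
        simpa using this
      simp [hF, hG, hk']
    · exact absurd (Fin.ext heq) hk
    · have hz : (descPochhammer (ZMod n) (k : ℕ)).eval x = 0 := by
        rw [eval_desc, hxval, Nat.descFactorial_eq_zero_iff_lt.mpr hgt]; simp
      simp [hF, hG, hz]
  have hdiff : F ⟨jv, hj⟩ = G ⟨jv, hj⟩ := by
    have hsum0 : ∑ k : Fin N, (F k - G k) = 0 := by
      rw [Finset.sum_sub_distrib]
      have := h x
      rw [Phi, Phi] at this
      rw [← hF, ← hG] at this ⊢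
      rw [this, sub_self]
    rw [Finset.sum_eq_single (⟨jv, hj⟩ : Fin N)] at hsum0
    · exact sub_eq_zero.mp hsum0
    · exact fun k _ hk => hFG k hk
    · exact fun hmem => absurd (mem_univ _) hmem
  set A := (a ⟨jv, hj⟩ : ℕ) with hA
  set B := (b ⟨jv, hj⟩ : ℕ) with hB
  have heval : (descPochhammer (ZMod n) jv).eval x = ((jv ! : ℕ) : ZMod n) := by
    rw [eval_desc, hxval, Nat.descFactorial_self]
  have hcast : ((A * jv ! : ℕ) : ZMod n) = ((B * jv ! : ℕ) : ZMod n) := by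
    push_cast
    rw [hF, hG] at hdiff
    simp only [heval] at hdiff
    exact_mod_cast hdiff
  have hmod : A * jv ! ≡ B * jv ! [MOD n] := (ZMod.natCast_eq_natCast_iff _ _ _).mp hcast
  have hz : (n : ℤ) ∣ ((B : ℤ) - (A : ℤ)) * (jv ! : ℤ) := by
    have hd := hmod.dvd
    rw [sub_mul]
    exact_mod_cast hd
  have hdl := d_dvd_of_dvd_mul hnpos jv hz
  have hAlt : A < d n jv := (a ⟨jv, hj⟩).isLt
  have hBlt : B < d n jv := (b ⟨jv, hj⟩).isLt
  have habs : |((B : ℤ) - (A : ℤ))| < (d n jv : ℤ) := by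
    rw [abs_lt]; constructor <;> push_cast <;> omega
  have h0 := Int.eq_zero_of_abs_lt_dvd hdl habs
  have : A = B := by omega
  exact Fin.ext this


lemma Phi_eval_poly (n N : ℕ) (a : ∀ k : Fin N, Fin (d n (k : ℕ))) :
    ∀ x, (∑ k : Fin N, C ((a k : ℕ) : ZMod n) * descPochhammer (ZMod n) (k : ℕ)).eval x
      = Phi n N a x := by
  intro x
  rw [eval_finset_sum]
  simp [Phi]

lemma Phi_surjective {n : ℕ} [Fact (1 < n)] {N : ℕ} (hN0 : 0 < N) (hN : n ∣ N !)
    (q : (ZMod n)[X]) : ∃ a, ∀ x, Phi n N a x = q.eval x := by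
  haveI : NeZero n := ⟨by have := (Fact.out : 1 < n); omega⟩
  have hnpos : 0 < n := by have := (Fact.out : 1 < n); omega
  obtain ⟨c, hc⟩ := repr_exists hN0 hN q
  refine ⟨fun k => ⟨(c (k : ℕ)).val % d n (k : ℕ), Nat.mod_lt _ (d_pos hnpos _)⟩, fun x => ?_⟩
  rw [Phi, hc x, ← Fin.sum_univ_eq_sum_range
    (fun k => c k * (descPochhammer (ZMod n) k).eval x) N]
  apply Finset.sum_congr rfl
  intro k _
  set v := (c (k : ℕ)).val with hv
  set dd := d n (k : ℕ) with hdd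
  have hsplit : v = dd * (v / dd) + v % dd := (Nat.div_add_mod v dd).symm
  have hck : c (k : ℕ) = ((v : ℕ) : ZMod n) := (ZMod.natCast_rightInverse _).symm
  have hnull : ((dd * (v / dd) : ℕ) : ZMod n) * (descPochhammer (ZMod n) (k : ℕ)).eval x = 0 := by
    apply null_mul
    have : dd * (v / dd) * k ! = (v / dd) * (dd * k !) := by ring
    rw [this]
    exact Dvd.dvd.mul_left (dvd_d_mul_factorial (k : ℕ)) _
  calc (((v % dd : ℕ)) : ZMod n) * (descPochhammer (ZMod n) (k : ℕ)).eval x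
      = (((dd * (v / dd) : ℕ)) : ZMod n) * (descPochhammer (ZMod n) (k : ℕ)).eval x
        + (((v % dd : ℕ)) : ZMod n) * (descPochhammer (ZMod n) (k : ℕ)).eval x := by
        rw [hnull]; ring
    _ = (((dd * (v / dd) + v % dd : ℕ)) : ZMod n) * (descPochhammer (ZMod n) (k : ℕ)).eval x := by
        push_cast; ring
    _ = c (k : ℕ) * (descPochhammer (ZMod n) (k : ℕ)).eval x := by rw [hck, ← hsplit]


lemma smarandache_dvd {n : ℕ} (hn : 0 < n) : n ∣ (smarandache n)! := by
  have h : (smarandache n) ∈ {k : ℕ | n ∣ Nat.factorial k} :=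
    csInf_mem ⟨n, show n ∣ n ! from Nat.dvd_factorial hn le_rfl⟩
  exact h

lemma smarandache_le {n K : ℕ} (h : n ∣ K !) : smarandache n ≤ K :=
  Nat.sInf_le (show K ∈ {k : ℕ | n ∣ Nat.factorial k} from h)

lemma not_dvd_of_lt_smarandache {n k : ℕ} (h : k < smarandache n) : ¬ n ∣ k ! :=
  fun hd => Nat.notMem_of_lt_sInf h (show k ∈ {k : ℕ | n ∣ Nat.factorial k} from hd)

lemma smarandache_pos {n : ℕ} (hn : 1 < n) : 0 < smarandache n := by
  rcases Nat.eq_zero_or_pos (smarandache n) with h | h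
  · exfalso
    have := smarandache_dvd (by omega : 0 < n)
    rw [h] at this
    simp [Nat.factorial] at this
    omega
  · exact h

lemma d_eq_pow (p m : ℕ) (hp : p.Prime) (k : ℕ) :
    d (p ^ m) k = p ^ ((Icc 1 m).filter (fun j => ¬ (p ^ j ∣ k !))).card := by
  have hkf : k ! ≠ 0 := (Nat.factorial_pos k).ne'
  set v := (k !).factorization p with hv
  have hdvd_iff : ∀ j, p ^ j ∣ k ! ↔ j ≤ v := fun j =>
    hp.pow_dvd_iff_le_factorization hkf
  have hfilter : (Icc 1 m).filter (fun j => ¬ (p ^ j ∣ k !)) = Icc (v + 1) m := by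
    ext j
    simp only [mem_filter, mem_Icc, hdvd_iff]
    omega
  have hgdvd : Nat.gcd (p ^ m) (k !) ∣ p ^ m := Nat.gcd_dvd_left _ _
  obtain ⟨i, him, hi⟩ := (Nat.dvd_prime_pow hp).mp hgdvd
  have hfact := Nat.factorization_gcd (pow_ne_zero m hp.pos.ne') hkf
  have h1 : (Nat.gcd (p ^ m) (k !)).factorization p = min m v := by
    rw [hfact, Finsupp.inf_apply, hp.factorization_pow]
    simp [hv]
  have h2 : (p ^ i).factorization p = i := by
    rw [hp.factorization_pow]; simp
  have hieq : i = min m v := by rw [← h2, ← hi, h1]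
  rw [d, hi, hieq, Nat.pow_div (min_le_left m v) hp.pos, hfilter, Nat.card_Icc]
  congr 1
  omega

lemma prod_d (p m : ℕ) (hp : p.Prime) (hm : 0 < m) :
    ∏ k ∈ range (smarandache (p ^ m)), d (p ^ m) k
      = p ^ ∑ j ∈ Icc 1 m, smarandache (p ^ j) := by
  set N := smarandache (p ^ m) with hN
  have hnpos : 0 < p ^ m := pow_pos hp.pos m
  have hNfac : p ^ m ∣ N ! := smarandache_dvd hnpos
  calc ∏ k ∈ range N, d (p ^ m) k
      = ∏ k ∈ range N, p ^ ((Icc 1 m).filter (fun j => ¬ (p ^ j ∣ k !))).card := by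
        exact Finset.prod_congr rfl fun k _ => d_eq_pow p m hp k
    _ = p ^ ∑ k ∈ range N, ((Icc 1 m).filter (fun j => ¬ (p ^ j ∣ k !))).card :=
        Finset.prod_pow_eq_pow_sum _ _ _
    _ = p ^ ∑ j ∈ Icc 1 m, smarandache (p ^ j) := by
        congr 1
        have hswap : ∑ k ∈ range N, ((Icc 1 m).filter (fun j => ¬ (p ^ j ∣ k !))).card
            = ∑ j ∈ Icc 1 m, ((range N).filter (fun k => ¬ (p ^ j ∣ k !))).card := by
          simp only [Finset.card_filter]
          rw [Finset.sum_comm]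
        rw [hswap]
        apply Finset.sum_congr rfl
        intro j hj
        rw [mem_Icc] at hj
        have hpj : 0 < p ^ j := pow_pos hp.pos j
        have hsj_le : smarandache (p ^ j) ≤ N := by
          apply smarandache_le
          exact dvd_trans (pow_dvd_pow p hj.2) hNfac
        have hdvd_iff : ∀ k, p ^ j ∣ k ! ↔ smarandache (p ^ j) ≤ k := by
          intro k
          constructor
          · intro h
            by_contra hlt
            exact not_dvd_of_lt_smarandache (by omega) h
          · intro h
            exact dvd_trans (smarandache_dvd hpj) (Nat.factorial_dvd_factorial h)
        have : (range N).filter (fun k => ¬ (p ^ j ∣ k !)) = range (smarandache (p ^ j)) := by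
          ext k
          simp only [mem_filter, mem_range, hdvd_iff]
          omega
        rw [this, Finset.card_range]


end PsiAux

open PsiAux in
/-- `Ψ(p^m) = p^{∑_{k=1}^m s(p^k)}` for `p` prime. -/
theorem Psi_prime_pow (p : ℕ) (hp : p.Prime) (m : ℕ) (hm : 0 < m) :
    Psi (p ^ m) = p ^ (∑ k ∈ Finset.Icc 1 m, smarandache (p ^ k)) := by
  have hn1 : 1 < p ^ m := Nat.one_lt_pow hm.ne' hp.one_lt
  haveI : Fact (1 < p ^ m) := ⟨hn1⟩
  haveI : NeZero (p ^ m) := ⟨by omega⟩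
  have hnpos : 0 < p ^ m := by omega
  set N := smarandache (p ^ m) with hNdef
  have hN0 : 0 < N := smarandache_pos hn1
  have hNfac : p ^ m ∣ N ! := smarandache_dvd hnpos
  have hNn : N ≤ p ^ m := smarandache_le (Nat.dvd_factorial hnpos le_rfl)
  set Φ' : (∀ k : Fin N, Fin (d (p ^ m) (k : ℕ))) →
      {f : ZMod (p ^ m) → ZMod (p ^ m) //
        ∃ q : Polynomial (ZMod (p ^ m)), ∀ x, q.eval x = f x} :=
    fun a => ⟨Phi (p ^ m) N a,
      ⟨∑ k : Fin N, C ((a k : ℕ) : ZMod (p ^ m)) * descPochhammer (ZMod (p ^ m)) (k : ℕ),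
        Phi_eval_poly _ _ a⟩⟩ with hΦ'
  have hbij : Function.Bijective Φ' := by
    constructor
    · intro a b hab
      apply Phi_injective hNn
      have := congrArg Subtype.val hab
      simpa [hΦ'] using this
    · rintro ⟨f, q, hq⟩
      obtain ⟨a, ha⟩ := Phi_surjective hN0 hNfac q
      exact ⟨a, Subtype.ext (funext fun x => (ha x).trans (hq x))⟩
  have hcard : Psi (p ^ m) = ∏ k ∈ range N, d (p ^ m) k := by
    rw [Psi, ← Nat.card_eq_of_bijective Φ' hbij, Nat.card_pi]
    simp only [Nat.card_eq_fintype_card, Fintype.card_fin]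
    exact Fin.prod_univ_eq_prod_range _ N
  rw [hcard, prod_d p m hp hm]
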